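/- Let X be a real Banach space with dim X ≥ 2, p > 1, F(x) = (1/p)‖x‖^p, and let j_p : X → X* be a selection of the duality mapping. Suppose there exist τ̄ > 0 and a nondecreasing function φ : [0,∞) → [0,∞) with φ(τ) > 0 for all τ > 0 such that δ_{F,x}^{j_p(x)}(τ) ≥ φ(τ) for all x ∈ S_X and all 0 < τ ≤ τ̄. Then X is uniformly convex, i.e. δ_X(ε) > 0 for every ε ∈ (0,2]. -/

import Mathlib

open scoped ENNReal

/-- The modulus of smoothness of a normed space `Y`:
`ρ_Y(τ) = sup {(‖x+τy‖+‖x−τy‖)/2 − 1 : x, y ∈ S_Y}`. -/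
noncomputable def rhoSpace (Y : Type*) [NormedAddCommGroup Y] [NormedSpace ℝ Y] (τ : ℝ) : ℝ :=
  sSup {r : ℝ | ∃ x y : Y, ‖x‖ = 1 ∧ ‖y‖ = 1 ∧ r = (‖x + τ • y‖ + ‖x - τ • y‖) / 2 - 1}

/-- The modulus of convexity of a normed space `Y`:
`δ_Y(ε) = inf {1 − ‖y+ỹ‖/2 : y, ỹ ∈ S_Y, ‖y−ỹ‖ = ε}`. -/
noncomputable def deltaSpace (Y : Type*) [NormedAddCommGroup Y] [NormedSpace ℝ Y] (ε : ℝ) : ℝ :=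
  sInf {r : ℝ | ∃ y z : Y, ‖y‖ = 1 ∧ ‖z‖ = 1 ∧ ‖y - z‖ = ε ∧ r = 1 - ‖y + z‖ / 2}

/-- `φ` is a subgradient of `F` at `x`: `F(y) ≥ F(x) + ⟨φ, y−x⟩` for all `y`. -/
def IsSubgradient {X : Type*} [NormedAddCommGroup X] [NormedSpace ℝ X]
    (F : X → ℝ) (x : X) (φ : X →L[ℝ] ℝ) : Prop :=
  ∀ y : X, F x + φ (y - x) ≤ F y

/-- The linearization error (Bregman divergence)
`Δ_F^{φ}(y,x) = F(y) − F(x) − ⟨φ, y−x⟩`. -/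
def breg {X : Type*} [NormedAddCommGroup X] [NormedSpace ℝ X]
    (F : X → ℝ) (φ : X →L[ℝ] ℝ) (y x : X) : ℝ :=
  F y - F x - φ (y - x)

/-- The modulus of smoothness of `F` at `x` w.r.t. `φ`, with values in `[0,∞]`:
`ρ_{F,x}^{φ}(τ) = sup {|Δ_F^{φ}(y,x)| : ‖y−x‖ = τ}`. -/
noncomputable def rhoF {X : Type*} [NormedAddCommGroup X] [NormedSpace ℝ X]
    (F : X → ℝ) (x : X) (φ : X →L[ℝ] ℝ) (τ : ℝ) : ℝ≥0∞ :=
  ⨆ y ∈ {y : X | ‖y - x‖ = τ}, ENNReal.ofReal |breg F φ y x|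

/-- The modulus of convexity of `F` at `x` w.r.t. `φ`, with values in `[0,∞]`:
`δ_{F,x}^{φ}(τ) = inf {|Δ_F^{φ}(y,x)| : ‖y−x‖ = τ}`. -/
noncomputable def deltaF {X : Type*} [NormedAddCommGroup X] [NormedSpace ℝ X]
    (F : X → ℝ) (x : X) (φ : X →L[ℝ] ℝ) (τ : ℝ) : ℝ≥0∞ :=
  ⨅ y ∈ {y : X | ‖y - x‖ = τ}, ENNReal.ofReal |breg F φ y x|

/-- `jp` is a selection of the duality mapping with exponent `p`:
`⟨j_p(x), x⟩ = ‖j_p(x)‖·‖x‖` and `‖j_p(x)‖ = ‖x‖^{p−1}` for every `x`. -/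
def IsDualitySelection {X : Type*} [NormedAddCommGroup X] [NormedSpace ℝ X]
    (p : ℝ) (jp : X → X →L[ℝ] ℝ) : Prop :=
  ∀ x : X, jp x x = ‖jp x‖ * ‖x‖ ∧ ‖jp x‖ = ‖x‖ ^ (p - 1)

/-- for `F = (1/p)‖·‖^p`, if there are `τ̄ > 0` and a nondecreasing
`φ : [0,∞) → [0,∞)` with `φ(τ) > 0` for `τ > 0` such that `δ_{F,x}^{j_p(x)}(τ) ≥ φ(τ)`
for all `x ∈ S_X` and `0 < τ ≤ τ̄`, then `X` is uniformly convex. -/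

private lemma young_aux {p t : ℝ} (hp : 1 < p) (ht : 0 ≤ t) :
    t ≤ t ^ p / p + (1 - 1 / p) := by
  have h := Real.HolderConjugate.conjExponent hp
  have h2 := Real.young_inequality_of_nonneg ht zero_le_one h
  rw [Real.one_rpow, mul_one] at h2
  have h3 : (Real.conjExponent p)⁻¹ = 1 - p⁻¹ := by
    have := h.inv_add_inv_eq_one
    linarith
  rw [one_div] at h2
  rw [h3] at h2
  rw [one_div]
  linarith

private lemma breg_nonneg_aux {X : Type*} [NormedAddCommGroup X] [NormedSpace ℝ X]
    {p : ℝ} (hp : 1 < p) {jp : X → X →L[ℝ] ℝ} (hjp : IsDualitySelection p jp)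
    {x : X} (hx : ‖x‖ = 1) (y : X) :
    0 ≤ breg (fun z : X => (1 / p) * ‖z‖ ^ p) (jp x) y x := by
  have hp0 : (0:ℝ) < p := by linarith
  obtain ⟨hj1, hj2⟩ := hjp x
  have hnorm : ‖jp x‖ = 1 := by rw [hj2, hx, Real.one_rpow]
  have hxx : jp x x = 1 := by rw [hj1, hnorm, hx, one_mul]
  have hy : jp x y ≤ ‖y‖ := by
    have h := (jp x).le_opNorm y
    rw [Real.norm_eq_abs, hnorm, one_mul] at h
    exact (abs_le.1 h).2
  have hyoung := young_aux hp (norm_nonneg y)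
  simp only [breg, map_sub, hxx, hx, Real.one_rpow]
  rw [div_eq_mul_inv, ← one_div] at hyoung
  nlinarith [hyoung, hy]

set_option maxHeartbeats 1000000 in
theorem stmt13 (X : Type*) [NormedAddCommGroup X] [NormedSpace ℝ X] [CompleteSpace X]
    (hdim : 2 ≤ Module.rank ℝ X)
    (p : ℝ) (hp : 1 < p)
    (jp : X → X →L[ℝ] ℝ) (hjp : IsDualitySelection p jp)
    (τbar : ℝ) (hτbar : 0 < τbar)
    (φ : ℝ → ℝ)
    (hφ0 : ∀ τ : ℝ, 0 ≤ τ → 0 ≤ φ τ)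
    (hφmono : ∀ τ₁ τ₂ : ℝ, 0 ≤ τ₁ → τ₁ ≤ τ₂ → φ τ₁ ≤ φ τ₂)
    (hφpos : ∀ τ : ℝ, 0 < τ → 0 < φ τ)
    (hbound : ∀ x : X, ‖x‖ = 1 → ∀ τ : ℝ, 0 < τ → τ ≤ τbar →
      ENNReal.ofReal (φ τ) ≤ deltaF (fun z : X => (1 / p) * ‖z‖ ^ p) x (jp x) τ) :
    ∀ ε : ℝ, 0 < ε → ε ≤ 2 → 0 < deltaSpace X ε := by
  intro ε hε hε2
  have hp0 : (0:ℝ) < p := by linarith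
  have hpne : p ≠ 0 := ne_of_gt hp0
  set τ := min τbar (ε / 2) with hτdef
  have hτpos : 0 < τ := lt_min hτbar (by linarith)
  have hτ1 : τ ≤ τbar := min_le_left _ _
  have hτ2 : τ ≤ ε / 2 := min_le_right _ _
  have hφτ : 0 < φ τ := hφpos τ hτpos
  set η : ℝ := (1 + p * φ τ) ^ (1 / p) - 1 with hηdef
  have hηpos : 0 < η := by
    have h1 : (1:ℝ) < 1 + p * φ τ := by nlinarith
    have h2 : (1:ℝ) < (1 + p * φ τ) ^ (1 / p) :=
      (Real.one_lt_rpow_iff_of_pos (by linarith)).2 (Or.inl ⟨h1, by positivity⟩)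
    simp only [hηdef]
    linarith
  set δ₀ : ℝ := η / (1 + η) with hδdef
  have hδpos : 0 < δ₀ := by positivity
  have key : ∀ u v : X, ‖u‖ = 1 → ‖v‖ = 1 → ‖u - v‖ = ε → δ₀ ≤ 1 - ‖u + v‖ / 2 := by
    intro u v hu hv huv
    set s := ‖u + v‖ with hs
    rcases eq_or_lt_of_le (norm_nonneg (u + v)) with h0 | h0
    · rw [← hs] at h0
      rw [← h0]
      clear_value τ η
      rw [hδdef, div_le_iff₀ (by positivity : (0:ℝ) < 1 + η)]
      nlinarith [hηpos]
    · have hs2 : s ≤ 2 := by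
        have := norm_add_le u v
        rw [hu, hv] at this
        linarith
      set x := s⁻¹ • (u + v) with hxdef
      have hx : ‖x‖ = 1 := by
        rw [hxdef, norm_smul, Real.norm_eq_abs, abs_inv, abs_of_pos h0, ← hs,
          inv_mul_cancel₀ (ne_of_gt h0)]
      set c := τ / ε with hcdef
      have hc0 : 0 < c := div_pos hτpos hε
      have hc2 : c ≤ 1 / 2 := by rw [hcdef, div_le_iff₀ hε]; linarith
      set w := c • (u - v) with hwdef
      have hwn : ‖w‖ = τ := by
        rw [hwdef, norm_smul, Real.norm_eq_abs, abs_of_pos hc0, huv, hcdef,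
          div_mul_cancel₀ _ (ne_of_gt hε)]
      set y₁ := x + w with hy₁def
      set y₂ := x - w with hy₂def
      have hy₁ : y₁ ∈ {y : X | ‖y - x‖ = τ} := by
        simp only [Set.mem_setOf_eq, hy₁def, add_sub_cancel_left, hwn]
      have hy₂ : y₂ ∈ {y : X | ‖y - x‖ = τ} := by
        simp only [Set.mem_setOf_eq, hy₂def, sub_sub_cancel_left, norm_neg, hwn]
      have hF := hbound x hx τ hτpos hτ1
      have hb1' : ENNReal.ofReal (φ τ) ≤
          ENNReal.ofReal |breg (fun z : X => (1 / p) * ‖z‖ ^ p) (jp x) y₁ x| :=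
        hF.trans (iInf₂_le y₁ hy₁)
      have hb2' : ENNReal.ofReal (φ τ) ≤
          ENNReal.ofReal |breg (fun z : X => (1 / p) * ‖z‖ ^ p) (jp x) y₂ x| :=
        hF.trans (iInf₂_le y₂ hy₂)
      have hb1 : φ τ ≤ breg (fun z : X => (1 / p) * ‖z‖ ^ p) (jp x) y₁ x := by
        have h := (ENNReal.ofReal_le_ofReal_iff (abs_nonneg _)).1 hb1'
        rwa [abs_of_nonneg (breg_nonneg_aux hp hjp hx y₁)] at h
      have hb2 : φ τ ≤ breg (fun z : X => (1 / p) * ‖z‖ ^ p) (jp x) y₂ x := by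
        have h := (ENNReal.ofReal_le_ofReal_iff (abs_nonneg _)).1 hb2'
        rwa [abs_of_nonneg (breg_nonneg_aux hp hjp hx y₂)] at h
      have e1 : y₁ - x = w := by rw [hy₁def]; abel
      have e2 : y₂ - x = -w := by rw [hy₂def]; abel
      have hsum : 2 * φ τ ≤ (1 / p) * ‖y₁‖ ^ p + (1 / p) * ‖y₂‖ ^ p - 2 * (1 / p) := by
        have hbreg : breg (fun z : X => (1 / p) * ‖z‖ ^ p) (jp x) y₁ x
            + breg (fun z : X => (1 / p) * ‖z‖ ^ p) (jp x) y₂ x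
            = (1 / p) * ‖y₁‖ ^ p + (1 / p) * ‖y₂‖ ^ p - 2 * (1 / p) := by
          simp only [breg, e1, e2, map_neg, hx, Real.one_rpow]
          ring
        linarith
      have hsinv : (2:ℝ)⁻¹ ≤ s⁻¹ := by
        rw [inv_le_inv₀ (by norm_num) h0]
        exact hs2
      have hn1 : ‖y₁‖ ≤ 2 * s⁻¹ := by
        have hrep : y₁ = (s⁻¹ + c) • u + (s⁻¹ - c) • v := by
          rw [hy₁def, hxdef, hwdef]; module
        rw [hrep]
        calc ‖(s⁻¹ + c) • u + (s⁻¹ - c) • v‖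
            ≤ ‖(s⁻¹ + c) • u‖ + ‖(s⁻¹ - c) • v‖ := norm_add_le _ _
          _ = (s⁻¹ + c) + (s⁻¹ - c) := by
              rw [norm_smul, norm_smul, hu, hv, mul_one, mul_one, Real.norm_eq_abs,
                Real.norm_eq_abs, abs_of_pos (by positivity), abs_of_nonneg (by linarith)]
          _ = 2 * s⁻¹ := by ring
      have hn2 : ‖y₂‖ ≤ 2 * s⁻¹ := by
        have hrep : y₂ = (s⁻¹ - c) • u + (s⁻¹ + c) • v := by
          rw [hy₂def, hxdef, hwdef]; module
        rw [hrep]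
        calc ‖(s⁻¹ - c) • u + (s⁻¹ + c) • v‖
            ≤ ‖(s⁻¹ - c) • u‖ + ‖(s⁻¹ + c) • v‖ := norm_add_le _ _
          _ = (s⁻¹ - c) + (s⁻¹ + c) := by
              rw [norm_smul, norm_smul, hu, hv, mul_one, mul_one, Real.norm_eq_abs,
                Real.norm_eq_abs, abs_of_nonneg (by linarith), abs_of_pos (by positivity)]
          _ = 2 * s⁻¹ := by ring
      have hr1 : ‖y₁‖ ^ p ≤ (2 * s⁻¹) ^ p := Real.rpow_le_rpow (norm_nonneg _) hn1 hp0.le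
      have hr2 : ‖y₂‖ ^ p ≤ (2 * s⁻¹) ^ p := Real.rpow_le_rpow (norm_nonneg _) hn2 hp0.le
      have h6 : 1 + p * φ τ ≤ (2 * s⁻¹) ^ p := by
        have h := mul_le_mul_of_nonneg_left hsum hp0.le
        have hq : p * ((1 / p) * ‖y₁‖ ^ p + (1 / p) * ‖y₂‖ ^ p - 2 * (1 / p))
            = ‖y₁‖ ^ p + ‖y₂‖ ^ p - 2 := by
          field_simp
        rw [hq] at h
        linarith [hr1, hr2]
      have h7 : 1 + η ≤ 2 * s⁻¹ := by
        have ha : (0:ℝ) < 1 + p * φ τ := by positivity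
        have hb : (0:ℝ) < 2 * s⁻¹ := by positivity
        have h8 := Real.rpow_le_rpow ha.le h6 (by positivity : (0:ℝ) ≤ 1 / p)
        calc 1 + η = (1 + p * φ τ) ^ (1 / p) := by rw [hηdef]; ring
          _ ≤ ((2 * s⁻¹) ^ p) ^ (1 / p) := h8
          _ = 2 * s⁻¹ := by
              rw [← Real.rpow_mul hb.le, mul_one_div, div_self hpne, Real.rpow_one]
      have h9 : (1 + η) * s ≤ 2 := by
        have hsne : s ≠ 0 := ne_of_gt h0
        have h := mul_le_mul_of_nonneg_right h7 h0.le
        have h10 : 2 * s⁻¹ * s = 2 := by field_simp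
        rw [h10] at h
        exact h
      clear_value τ η s
      rw [hδdef, div_le_iff₀ (by positivity : (0:ℝ) < 1 + η)]
      have hid : (1 - s / 2) * (1 + η) - η = (2 - (1 + η) * s) / 2 := by ring
      linarith only [h9, hid]
  have hrank : 1 < Module.rank ℝ X := lt_of_lt_of_le (by norm_num) hdim
  have hconn : IsConnected (Metric.sphere (0:X) 1) := isConnected_sphere hrank 0 zero_le_one
  obtain ⟨u, hu⟩ := hconn.nonempty
  have hu1 : ‖u‖ = 1 := by simpa using hu
  have hmu : -u ∈ Metric.sphere (0:X) 1 := by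
    simp [mem_sphere_iff_norm, hu1]
  have hcont : ContinuousOn (fun z : X => ‖u - z‖) (Metric.sphere (0:X) 1) :=
    ((continuous_const.sub continuous_id).norm).continuousOn
  have hIcc : Set.Icc (‖u - u‖) (‖u - -u‖) ⊆
      (fun z : X => ‖u - z‖) '' Metric.sphere (0:X) 1 :=
    hconn.isPreconnected.intermediate_value hu hmu hcont
  have h2u : ‖u - -u‖ = 2 := by
    rw [sub_neg_eq_add, ← two_smul ℝ u, norm_smul, hu1]
    norm_num
  have hεmem : ε ∈ Set.Icc (‖u - u‖) (‖u - -u‖) := by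
    rw [sub_self, norm_zero, h2u]
    exact ⟨hε.le, hε2⟩
  obtain ⟨v, hvmem, hveq⟩ := hIcc hεmem
  have hv1 : ‖v‖ = 1 := by simpa using hvmem
  have hne : {r : ℝ | ∃ y z : X, ‖y‖ = 1 ∧ ‖z‖ = 1 ∧ ‖y - z‖ = ε ∧
      r = 1 - ‖y + z‖ / 2}.Nonempty := ⟨_, u, v, hu1, hv1, hveq, rfl⟩
  have hlb : ∀ r ∈ {r : ℝ | ∃ y z : X, ‖y‖ = 1 ∧ ‖z‖ = 1 ∧ ‖y - z‖ = ε ∧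
      r = 1 - ‖y + z‖ / 2}, δ₀ ≤ r := by
    rintro r ⟨y, z, h1, h2, h3, rfl⟩
    exact key y z h1 h2 h3
  exact lt_of_lt_of_le hδpos (le_csInf hne hlb)
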